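/- Let c1, c2 > 0 and let D be a probability distribution on ℝ^d satisfying the (c1, c2)-conditions. Let γ ∈ (0, 1], let v ∈ ℝ^d be a unit vector, and let b ∈ ℝ. Define N_{v,b} = { x ∈ ℝ^d : there exist a unit vector v' ∈ ℝ^d and b' ∈ ℝ with ‖v − v'‖ ≤ γ, |b − b'| ≤ γ, and |⟨v', x⟩ + b'| ≤ γ }. Then D(N_{v,b}) ≤ 2·c2·(γ + √γ) + c1·d·√γ. -/

import Mathlib

open MeasureTheory
open scoped RealInnerProductSpace ENNReal

noncomputable section

/-- `d`-dimensional Euclidean space. -/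
abbrev Euc (d : ℕ) := EuclideanSpace ℝ (Fin d)

/-- A linear separator on `ℝ^d`: a function of the form `x ↦ ⟪v, x⟫ + b`. -/
def IsLinSep {d : ℕ} (h : Euc d → ℝ) : Prop :=
  ∃ (v : Euc d) (b : ℝ), ∀ x, h x = ⟪v, x⟫ + b

/-- `h'` is query-consistent with `h` on `S`: all label queries and all
comparison queries on `S` agree. -/
def QueryConsistent {d : ℕ} (h h' : Euc d → ℝ) (S : Set (Euc d)) : Prop :=
  (∀ x ∈ S, Real.sign (h' x) = Real.sign (h x)) ∧
  (∀ x ∈ S, ∀ y ∈ S, Real.sign (h' x - h' y) = Real.sign (h x - h y))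

/-- `S` infers `z` under `h` (written `S →ₕ z`): every linear separator that is
query-consistent with `h` on `S` assigns `z` the same label as `h`. -/
def Infers {d : ℕ} (h : Euc d → ℝ) (S : Set (Euc d)) (z : Euc d) : Prop :=
  ∀ h' : Euc d → ℝ, IsLinSep h' → QueryConsistent h h' S →
    Real.sign (h' z) = Real.sign (h z)

/-- The `(c1, c2)`-conditions on a distribution `D` over `ℝ^d`:
concentration of the norm and anti-concentration of one-dimensional marginals. -/
def Conditions {d : ℕ} (D : Measure (Euc d)) (c1 c2 : ℝ) : Prop :=
  (∀ α : ℝ, 0 < α → D {x | (d : ℝ) * α < ‖x‖} ≤ ENNReal.ofReal (c1 / α)) ∧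
  (∀ α : ℝ, 0 < α → ∀ v : Euc d, ‖v‖ = 1 → ∀ b : ℝ,
      D {x | |⟪v, x⟫ + b| ≤ α} ≤ ENNReal.ofReal (c2 * α))

/-- The measure of the `γ`-net element `N_{v,b}` (union of `γ`-strips near the
hyperplane `⟪v,·⟫ + b`) is at most `2 c2 (γ + √γ) + c1 d √γ`. -/
theorem stmt9 (d : ℕ) (c1 c2 : ℝ) (hc1 : 0 < c1) (hc2 : 0 < c2)
    (D : Measure (Euc d)) [IsProbabilityMeasure D] (hD : Conditions D c1 c2)
    (γ : ℝ) (hγ : γ ∈ Set.Ioc (0 : ℝ) 1) (v : Euc d) (hv : ‖v‖ = 1) (b : ℝ) :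
    D {x | ∃ v' : Euc d, ‖v'‖ = 1 ∧ ∃ b' : ℝ,
        ‖v - v'‖ ≤ γ ∧ |b - b'| ≤ γ ∧ |⟪v', x⟫ + b'| ≤ γ}
      ≤ ENNReal.ofReal (2 * c2 * (γ + Real.sqrt γ) + c1 * d * Real.sqrt γ) := by
  obtain ⟨hγ0, hγ1⟩ := hγ
  have hs : 0 < Real.sqrt γ := Real.sqrt_pos.2 hγ0
  have hds : γ / Real.sqrt γ = Real.sqrt γ := Real.div_sqrt
  set S : Set (Euc d) := {x | |⟪v, x⟫ + b| ≤ 2 * γ + Real.sqrt γ} with hS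
  set T : Set (Euc d) := {x | 1 / Real.sqrt γ < ‖x‖} with hT
  have hsub : {x : Euc d | ∃ v' : Euc d, ‖v'‖ = 1 ∧ ∃ b' : ℝ,
      ‖v - v'‖ ≤ γ ∧ |b - b'| ≤ γ ∧ |⟪v', x⟫ + b'| ≤ γ} ⊆ S ∪ T := by
    rintro x ⟨v', hv', b', hvv, hbb, hx'⟩
    by_cases hbig : 1 / Real.sqrt γ < ‖x‖
    · exact Or.inr hbig
    push_neg at hbig
    left
    have hx0 : (0:ℝ) ≤ ‖x‖ := norm_nonneg x
    have hrw : ⟪v, x⟫ + b = (⟪v', x⟫ + b') + ⟪v - v', x⟫ + (b - b') := by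
      rw [inner_sub_left]; ring
    have h1 : |⟪v - v', x⟫| ≤ Real.sqrt γ := by
      have := abs_real_inner_le_norm (v - v') x
      have h2 : ‖v - v'‖ * ‖x‖ ≤ γ * (1 / Real.sqrt γ) :=
        mul_le_mul hvv hbig hx0 hγ0.le
      have h3 : γ * (1 / Real.sqrt γ) = Real.sqrt γ := by
        rw [mul_one_div, hds]
      linarith
    calc |⟪v, x⟫ + b| ≤ |(⟪v', x⟫ + b') + ⟪v - v', x⟫| + |b - b'| := by
            rw [hrw]; exact abs_add_le _ _
      _ ≤ |⟪v', x⟫ + b'| + |⟪v - v', x⟫| + |b - b'| := by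
            have := abs_add_le (⟪v', x⟫ + b') ⟪v - v', x⟫; linarith
      _ ≤ 2 * γ + Real.sqrt γ := by linarith
  have hSle : D S ≤ ENNReal.ofReal (c2 * (2 * γ + Real.sqrt γ)) :=
    hD.2 (2 * γ + Real.sqrt γ) (by linarith) v hv b
  have hTle : D T ≤ ENNReal.ofReal (c1 * d * Real.sqrt γ) := by
    rcases Nat.eq_zero_or_pos d with hd | hd
    · have : T = ∅ := by
        ext x
        simp only [hT, Set.mem_setOf_eq, Set.mem_empty_iff_false, iff_false, not_lt]
        have : x = 0 := by subst hd; exact Subsingleton.elim x 0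
        rw [this, norm_zero]
        positivity
      rw [this, measure_empty]
      exact zero_le
    · have hd0 : (0:ℝ) < (d:ℝ) := by exact_mod_cast hd
      have hα : (0:ℝ) < 1 / ((d:ℝ) * Real.sqrt γ) := by positivity
      have := hD.1 (1 / ((d:ℝ) * Real.sqrt γ)) hα
      have hset : {x : Euc d | (d:ℝ) * (1 / ((d:ℝ) * Real.sqrt γ)) < ‖x‖} = T := by
        ext x
        simp only [hT, Set.mem_setOf_eq]
        rw [show (d:ℝ) * (1 / ((d:ℝ) * Real.sqrt γ)) = 1 / Real.sqrt γ by
          field_simp]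
      have hval : c1 / (1 / ((d:ℝ) * Real.sqrt γ)) = c1 * d * Real.sqrt γ := by
        field_simp
      rwa [hset, hval] at this
  calc D {x : Euc d | ∃ v' : Euc d, ‖v'‖ = 1 ∧ ∃ b' : ℝ,
        ‖v - v'‖ ≤ γ ∧ |b - b'| ≤ γ ∧ |⟪v', x⟫ + b'| ≤ γ}
        ≤ D (S ∪ T) := measure_mono hsub
    _ ≤ D S + D T := measure_union_le _ _
    _ ≤ ENNReal.ofReal (c2 * (2 * γ + Real.sqrt γ)) +
          ENNReal.ofReal (c1 * d * Real.sqrt γ) := add_le_add hSle hTle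
    _ ≤ ENNReal.ofReal (2 * c2 * (γ + Real.sqrt γ) + c1 * d * Real.sqrt γ) := by
        rw [← ENNReal.ofReal_add (by positivity) (by positivity)]
        apply ENNReal.ofReal_le_ofReal
        nlinarith [hs.le, hc2.le]
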